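/- Let ((ξ_{u,i})_{i≥0})_{u∈𝕌} be an i.i.d. family of random sequences with values in the set of sequences (x_i)_{i≥0} with x_i ∈ [0,1) for all i and Σ_{i≥0} x_i = 1, such that E[ξ_0 + ξ_1] < 1, let β ∈ (0,1) and let p be such that pβ > 1. Then lim_{k→∞} limsup_{n→∞} Σ_{u} E[ξ̄_u^{pβ}] = 0, where for given k and n ≥ k+1 the sum is over all words of the form u = w v j with w ∈ ℕ^k, v ∈ {0,1}^t for some 0 ≤ t ≤ n−k−1, and j ∈ {2,3,4,…}. -/

import Mathlib

open MeasureTheory ProbabilityTheory Filter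
open scoped ENNReal Topology

noncomputable section

/-- `ξ̄_u`: the product of the entries of the sequences attached along the path from the
root to the word `u`, i.e. `ξ̄_{u₁…uₙ} = ∏_{k=1}^n ξ_{u₁…u_{k-1}, u_k}`, with `ξ̄_∅ = 1`. -/
def xibar {Ω : Type*} (ξ : List ℕ → ℕ → Ω → ℝ) (u : List ℕ) (ω : Ω) : ℝ :=
  ∏ k ∈ Finset.range u.length, ξ (u.take k) (u.getD k 0) ω

namespace Stmt11Aux

lemma xibar_append {Ω : Type*} (ξ : List ℕ → ℕ → Ω → ℝ) (u : List ℕ) (j : ℕ) (ω : Ω) :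
    xibar ξ (u ++ [j]) ω = xibar ξ u ω * ξ u j ω := by
  unfold xibar
  rw [List.length_append, List.length_singleton, Finset.prod_range_succ]
  congr 1
  · apply Finset.prod_congr rfl
    intro k hk
    rw [Finset.mem_range] at hk
    rw [List.take_append_of_le_length hk.le, List.getD_append _ _ _ _ hk]
  · rw [List.take_append_of_le_length le_rfl, List.take_length,
      List.getD_append_right _ _ _ _ le_rfl, Nat.sub_self]
    rfl

lemma meas_ofReal_rpow {α : Type*} [MeasurableSpace α] {f : α → ℝ} (hf : Measurable f)
    (q : ℝ) : Measurable fun a => ENNReal.ofReal (f a ^ q) := by fun_prop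

/-- The product `∏_{k < |u|} c(u_k)` of per-letter constants along a word. -/
def Dprod (c : ℕ → ℝ≥0∞) (u : List ℕ) : ℝ≥0∞ :=
  ∏ k ∈ Finset.range u.length, c (u.getD k 0)

lemma Dprod_append (c : ℕ → ℝ≥0∞) (l1 l2 : List ℕ) :
    Dprod c (l1 ++ l2) = Dprod c l1 * Dprod c l2 := by
  unfold Dprod
  rw [List.length_append, Finset.prod_range_add]
  congr 1
  · exact Finset.prod_congr rfl fun k hk =>
      by rw [List.getD_append _ _ _ _ (Finset.mem_range.1 hk)]
  · exact Finset.prod_congr rfl fun k _ => by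
      rw [List.getD_append_right _ _ _ _ (Nat.le_add_right _ _), Nat.add_sub_cancel_left]

lemma Dprod_ofFn (c : ℕ → ℝ≥0∞) {k : ℕ} (w : Fin k → ℕ) :
    Dprod c (List.ofFn w) = ∏ i : Fin k, c (w i) := by
  unfold Dprod
  rw [List.length_ofFn, ← Fin.prod_univ_eq_prod_range (fun i => c ((List.ofFn w).getD i 0)) k]
  refine Finset.prod_congr rfl fun i _ => ?_
  rw [List.getD_eq_getElem _ _ (by simp [i.isLt]), List.getElem_ofFn]

lemma Dprod_singleton (c : ℕ → ℝ≥0∞) (j : ℕ) : Dprod c (j :: []) = c j := by simp [Dprod]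

lemma tsum_pi_prod (c : ℕ → ℝ≥0∞) : ∀ k : ℕ,
    (∑' w : Fin k → ℕ, ∏ i : Fin k, c (w i)) = (∑' i, c i) ^ k
  | 0 => by
    rw [pow_zero,
      tsum_eq_single (fun i : Fin 0 => i.elim0)
        (fun w hw => absurd (funext fun i => i.elim0) hw)]
    simp
  | (k+1) => by
    rw [← (Fin.consEquiv (fun _ : Fin (k+1) => ℕ)).tsum_eq, ENNReal.tsum_prod']
    simp only [Fin.consEquiv_apply, Fin.prod_univ_succ, Fin.cons_zero, Fin.cons_succ,
      ENNReal.tsum_mul_left]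
    rw [ENNReal.tsum_mul_right, tsum_pi_prod c k, pow_succ']

section

variable {Ω : Type*} [m0 : MeasurableSpace Ω] {P : Measure Ω} [IsProbabilityMeasure P]
  {ξ : List ℕ → ℕ → Ω → ℝ}

omit [IsProbabilityMeasure P] in
lemma xibar_meas (hmeas : ∀ u i, Measurable (ξ u i)) (u : List ℕ) :
    Measurable (xibar ξ u) :=
  Finset.measurable_prod _ fun k _ => hmeas _ _

omit [IsProbabilityMeasure P] in
lemma xibar_ae_nonneg
    (hval : ∀ u : List ℕ, ∀ᵐ ω ∂P,
      (∀ i, ξ u i ω ∈ Set.Ico (0 : ℝ) 1) ∧ (∑' i, ξ u i ω) = 1)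
    (u : List ℕ) : ∀ᵐ ω ∂P, 0 ≤ xibar ξ u ω := by
  have h : ∀ᵐ ω ∂P, ∀ k ∈ Finset.range u.length,
      0 ≤ ξ (u.take k) (u.getD k 0) ω :=
    (Filter.eventually_all_finset _).2
      fun k _ => (hval (u.take k)).mono fun ω h => (h.1 _).1
  exact h.mono fun ω h => Finset.prod_nonneg h

/-- Factorization of the expectation of `ξ̄_u^q` along the letters of `u`,
using independence and identical distribution. -/
lemma factorize (hmeas : ∀ u i, Measurable (ξ u i))
    (hindep : iIndepFun
      (fun u ω i => ξ u i ω) P)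
    (hident : ∀ u : List ℕ, IdentDistrib (fun ω i => ξ u i ω) (fun ω i => ξ [] i ω) P P)
    (hval : ∀ u : List ℕ, ∀ᵐ ω ∂P,
      (∀ i, ξ u i ω ∈ Set.Ico (0 : ℝ) 1) ∧ (∑' i, ξ u i ω) = 1)
    (q : ℝ) (u : List ℕ) :
    ∫⁻ ω, ENNReal.ofReal ((xibar ξ u ω) ^ q) ∂P
      = Dprod (fun i => ∫⁻ ω, ENNReal.ofReal ((ξ [] i ω) ^ q) ∂P) u := by
  induction u using List.reverseRecOn with
  | nil => simp [xibar, Dprod, Real.one_rpow]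
  | append_singleton u j ih =>
    classical
    set Y : List ℕ → Ω → (ℕ → ℝ) := fun v ω i => ξ v i ω with hY
    have hYmeas : ∀ v, Measurable (Y v) :=
      fun v => measurable_pi_lambda _ (fun i => hmeas v i)
    set S : Finset (List ℕ) := (Finset.range u.length).image (u.take ·) with hS
    have hmemS : ∀ k ∈ Finset.range u.length, u.take k ∈ S :=
      fun k hk => Finset.mem_image_of_mem _ hk
    have huS : u ∉ S := by
      intro hu
      rw [hS, Finset.mem_image] at hu
      obtain ⟨k, hk, hku⟩ := hu
      rw [Finset.mem_range] at hk
      have := congrArg List.length hku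
      rw [List.length_take] at this
      omega
    have hdisj : Disjoint S ({u} : Finset (List ℕ)) := by
      rw [Finset.disjoint_singleton_right]; exact huS
    set φ : ((v : S) → (ℕ → ℝ)) → ℝ≥0∞ := fun g => ENNReal.ofReal
      ((∏ k ∈ Finset.range u.length,
        if h : u.take k ∈ S then g ⟨u.take k, h⟩ (u.getD k 0) else 0) ^ q) with hφ
    set ψ : ((v : ({u} : Finset (List ℕ))) → (ℕ → ℝ)) → ℝ≥0∞ := fun g =>
      ENNReal.ofReal ((g ⟨u, Finset.mem_singleton_self u⟩ j) ^ q) with hψ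
    have hφmeas : Measurable φ := by
      apply meas_ofReal_rpow
      apply Finset.measurable_prod
      intro k _
      by_cases h : u.take k ∈ S
      · simp only [dif_pos h]
        exact (measurable_pi_apply _).comp (measurable_pi_apply _)
      · simp only [dif_neg h]; exact measurable_const
    have hψmeas : Measurable ψ :=
      meas_ofReal_rpow ((measurable_pi_apply _).comp (measurable_pi_apply _)) q
    have hindFG : IndepFun (fun ω => ENNReal.ofReal ((xibar ξ u ω) ^ q))
        (fun ω => ENNReal.ofReal ((ξ u j ω) ^ q)) P := by
      have base := (hindep.indepFun_finset S {u} hdisj hYmeas).comp hφmeas hψmeas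
      have hF : (φ ∘ fun ω (v : S) => Y v ω)
          = fun ω => ENNReal.ofReal ((xibar ξ u ω) ^ q) := by
        funext ω
        simp only [Function.comp_apply, hφ]
        congr 2
        exact Finset.prod_congr rfl fun k hk => by rw [dif_pos (hmemS k hk)]
      have hG : (ψ ∘ fun ω (v : ({u} : Finset (List ℕ))) => Y v ω)
          = fun ω => ENNReal.ofReal ((ξ u j ω) ^ q) := rfl
      rwa [hF, hG] at base
    have hstep : ∫⁻ ω, ENNReal.ofReal ((xibar ξ (u ++ [j]) ω) ^ q) ∂P
        = (∫⁻ ω, ENNReal.ofReal ((xibar ξ u ω) ^ q) ∂P)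
          * ∫⁻ ω, ENNReal.ofReal ((ξ u j ω) ^ q) ∂P := by
      rw [← lintegral_mul_eq_lintegral_mul_lintegral_of_indepFun''
        (meas_ofReal_rpow (xibar_meas hmeas u) q).aemeasurable
        (meas_ofReal_rpow (hmeas u j) q).aemeasurable hindFG]
      refine lintegral_congr_ae ?_
      filter_upwards [xibar_ae_nonneg hval u, hval u] with ω h1 h2
      rw [xibar_append, Real.mul_rpow h1 (h2.1 j).1,
        ENNReal.ofReal_mul (Real.rpow_nonneg h1 q)]
    have hid : ∫⁻ ω, ENNReal.ofReal ((ξ u j ω) ^ q) ∂P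
        = ∫⁻ ω, ENNReal.ofReal ((ξ [] j ω) ^ q) ∂P := by
      have hm : Measurable (fun g : ℕ → ℝ => ENNReal.ofReal ((g j) ^ q)) :=
        meas_ofReal_rpow (measurable_pi_apply j) q
      exact ((hident u).comp hm).lintegral_eq
    rw [hstep, ih, hid]
    unfold Dprod
    rw [List.length_append, List.length_singleton, Finset.prod_range_succ]
    congr 1
    · exact Finset.prod_congr rfl fun k hk => by
        rw [List.getD_append _ _ _ _ (Finset.mem_range.1 hk)]
    · rw [List.getD_append_right _ _ _ _ le_rfl, Nat.sub_self]
      rfl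

/-- The total mass `Σ_i E[ξ_i^q]` is strictly less than `1` when `q > 1`. -/
lemma ctot_lt_one (hmeas : ∀ u i, Measurable (ξ u i))
    (hval : ∀ u : List ℕ, ∀ᵐ ω ∂P,
      (∀ i, ξ u i ω ∈ Set.Ico (0 : ℝ) 1) ∧ (∑' i, ξ u i ω) = 1)
    (q : ℝ) (hq : 1 < q) :
    (∑' i, ∫⁻ ω, ENNReal.ofReal ((ξ [] i ω) ^ q) ∂P) < 1 := by
  have hXmeas : ∀ i, Measurable fun ω => ENNReal.ofReal ((ξ [] i ω) ^ q) :=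
    fun i => meas_ofReal_rpow (hmeas [] i) q
  rw [← lintegral_tsum (fun i => (hXmeas i).aemeasurable)]
  have hae : ∀ᵐ ω ∂P, (∑' i, ENNReal.ofReal ((ξ [] i ω) ^ q)) < 1 := by
    filter_upwards [hval []] with ω h
    have hsummable : Summable fun i => ξ [] i ω := by
      by_contra hns
      rw [tsum_eq_zero_of_not_summable hns] at h
      exact one_ne_zero h.2.symm
    have hsum1 : (∑' i, ENNReal.ofReal (ξ [] i ω)) = 1 := by
      rw [← ENNReal.ofReal_tsum_of_nonneg (fun i => (h.1 i).1) hsummable, h.2,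
        ENNReal.ofReal_one]
    obtain ⟨i0, hi0⟩ : ∃ i, ξ [] i ω ≠ 0 := by
      by_contra hz
      push_neg at hz
      rw [tsum_congr hz] at h
      simp at h
    have hle : ∀ i, ENNReal.ofReal ((ξ [] i ω) ^ q) ≤ ENNReal.ofReal (ξ [] i ω) := by
      intro i
      apply ENNReal.ofReal_le_ofReal
      rcases eq_or_lt_of_le (h.1 i).1 with hz | hp
      · rw [← hz, Real.zero_rpow (by linarith)]
      · calc (ξ [] i ω) ^ q ≤ (ξ [] i ω) ^ (1:ℝ) :=
              Real.rpow_le_rpow_of_exponent_ge hp (h.1 i).2.le hq.le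
          _ = ξ [] i ω := Real.rpow_one _
    have hlt : ENNReal.ofReal ((ξ [] i0 ω) ^ q) < ENNReal.ofReal (ξ [] i0 ω) := by
      have hp : 0 < ξ [] i0 ω := lt_of_le_of_ne (h.1 i0).1 (Ne.symm hi0)
      rw [ENNReal.ofReal_lt_ofReal_iff hp]
      calc (ξ [] i0 ω) ^ q < (ξ [] i0 ω) ^ (1:ℝ) :=
            Real.rpow_lt_rpow_of_exponent_gt hp (h.1 i0).2 hq
        _ = ξ [] i0 ω := Real.rpow_one _
    calc (∑' i, ENNReal.ofReal ((ξ [] i ω) ^ q))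
        < ∑' i, ENNReal.ofReal (ξ [] i ω) := by
          apply ENNReal.tsum_lt_tsum _ hle hlt
          exact ne_top_of_le_ne_top (by rw [hsum1]; exact ENNReal.one_ne_top)
            (ENNReal.tsum_le_tsum hle)
      _ = 1 := hsum1
  have hne : P ≠ 0 := IsProbabilityMeasure.ne_zero P
  calc ∫⁻ ω, ∑' i, ENNReal.ofReal ((ξ [] i ω) ^ q) ∂P
      < ∫⁻ _, 1 ∂P := by
        apply lintegral_strict_mono hne aemeasurable_const _ hae
        · apply ne_top_of_le_ne_top (by simp : (∫⁻ _, (1:ℝ≥0∞) ∂P) ≠ ⊤)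
          exact lintegral_mono_ae (hae.mono fun ω h => h.le)
    _ = 1 := by simp

end

end Stmt11Aux

open Stmt11Aux in
/-- For an i.i.d. family `(ξ_{u,·})_{u∈𝕌}` of random sequences with values
in `[0,1)` summing to `1`, with `E[ξ_0 + ξ_1] < 1`, `β ∈ (0,1)` and `pβ > 1`,
`lim_{k→∞} limsup_{n→∞} Σ_u E[ξ̄_u^{pβ}] = 0`, where for given `k` and `n ≥ k+1` the sum is
over all words `u = w v j` with `w ∈ ℕ^k`, `v ∈ {0,1}^t` for some `0 ≤ t ≤ n-k-1`, and
`j ∈ {2,3,…}`. -/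
theorem stmt11 {Ω : Type*} [m0 : MeasurableSpace Ω] {P : Measure Ω} [IsProbabilityMeasure P]
    (ξ : List ℕ → ℕ → Ω → ℝ)
    (hmeas : ∀ u i, Measurable (ξ u i))
    (hindep : iIndepFun
      (fun u ω i => ξ u i ω) P)
    (hident : ∀ u : List ℕ, IdentDistrib (fun ω i => ξ u i ω) (fun ω i => ξ [] i ω) P P)
    (hval : ∀ u : List ℕ, ∀ᵐ ω ∂P,
      (∀ i, ξ u i ω ∈ Set.Ico (0 : ℝ) 1) ∧ (∑' i, ξ u i ω) = 1)
    (hmean : ∫ ω, (ξ [] 0 ω + ξ [] 1 ω) ∂P < 1)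
    (β : ℝ) (hβ : β ∈ Set.Ioo (0 : ℝ) 1) (p : ℝ) (hpβ : 1 < p * β) :
    Tendsto (fun k : ℕ =>
        Filter.limsup (fun n : ℕ =>
          ∑' w : Fin k → ℕ, ∑ t ∈ Finset.range (n - k), ∑ v : Fin t → Fin 2, ∑' j : ℕ,
            ∫⁻ ω, ENNReal.ofReal
              ((xibar ξ
                  (List.ofFn w ++ (List.ofFn fun i => ((v i : ℕ))) ++ [j + 2]) ω)
                ^ (p * β)) ∂P) atTop)
      atTop (𝓝 0) := by
  classical
  set q : ℝ := p * β with hqdef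
  set c : ℕ → ℝ≥0∞ := fun i => ∫⁻ ω, ENNReal.ofReal ((ξ [] i ω) ^ q) ∂P with hc
  have hctot : (∑' i, c i) < 1 := ctot_lt_one hmeas hval q hpβ
  set ctot : ℝ≥0∞ := ∑' i, c i with hctotdef
  set a : ℝ≥0∞ := c 0 + c 1 with hadef
  have ha : a ≤ ctot := by
    rw [hadef, ← Finset.sum_pair (by norm_num : (0:ℕ) ≠ 1)]
    exact ENNReal.sum_le_tsum _
  have ha1 : a < 1 := lt_of_le_of_lt ha hctot
  set d : ℝ≥0∞ := ∑' j : ℕ, c (j + 2) with hddef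
  have hd : d ≤ ctot :=
    ENNReal.tsum_comp_le_tsum_of_injective (fun x y hxy => by omega) c
  set K : ℝ≥0∞ := (1 - a)⁻¹ * d with hK
  have hKne : K ≠ ∞ := by
    apply ENNReal.mul_ne_top
    · rw [ENNReal.inv_ne_top, ne_eq, tsub_eq_zero_iff_le]
      exact not_le.2 ha1
    · exact ((lt_of_le_of_lt hd hctot).trans_le le_top).ne
  -- value of each summand
  have hterm : ∀ (k : ℕ) (w : Fin k → ℕ) (t : ℕ) (v : Fin t → Fin 2) (j : ℕ),
      (∫⁻ ω, ENNReal.ofReal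
          ((xibar ξ (List.ofFn w ++ (List.ofFn fun i => ((v i : ℕ))) ++ [j + 2]) ω) ^ q) ∂P)
        = (∏ i, c (w i)) * ((∏ i, c ((v i : ℕ))) * c (j + 2)) := by
    intro k w t v j
    rw [factorize hmeas hindep hident hval q _, Dprod_append, Dprod_append,
      Dprod_ofFn, Dprod_ofFn, Dprod_singleton, mul_assoc]
  have hv : ∀ t : ℕ, (∑ v : Fin t → Fin 2, ∏ i, c ((v i : ℕ))) = a ^ t := by
    intro t
    rw [← Fintype.piFinset_univ,
      ← Finset.prod_univ_sum (fun _ : Fin t => (Finset.univ : Finset (Fin 2)))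
        (fun _ j => c (j : ℕ))]
    simp only [Fin.sum_univ_two, Fin.val_zero, Fin.val_one, Finset.prod_const,
      Finset.card_univ, Fintype.card_fin, hadef]
  -- value of the whole sum for fixed k, n
  have hsum : ∀ k n : ℕ,
      (∑' w : Fin k → ℕ, ∑ t ∈ Finset.range (n - k), ∑ v : Fin t → Fin 2, ∑' j : ℕ,
          ∫⁻ ω, ENNReal.ofReal
            ((xibar ξ (List.ofFn w ++ (List.ofFn fun i => ((v i : ℕ))) ++ [j + 2]) ω)
              ^ q) ∂P)
        = ctot ^ k * ((∑ t ∈ Finset.range (n - k), a ^ t) * d) := by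
    intro k n
    have hw : ∀ w : Fin k → ℕ,
        (∑ t ∈ Finset.range (n - k), ∑ v : Fin t → Fin 2, ∑' j : ℕ,
            ∫⁻ ω, ENNReal.ofReal
              ((xibar ξ (List.ofFn w ++ (List.ofFn fun i => ((v i : ℕ))) ++ [j + 2]) ω)
                ^ q) ∂P)
          = (∏ i, c (w i)) * ((∑ t ∈ Finset.range (n - k), a ^ t) * d) := by
      intro w
      calc (∑ t ∈ Finset.range (n - k), ∑ v : Fin t → Fin 2, ∑' j : ℕ,
              ∫⁻ ω, ENNReal.ofReal
                ((xibar ξ (List.ofFn w ++ (List.ofFn fun i => ((v i : ℕ))) ++ [j + 2]) ω)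
                  ^ q) ∂P)
          = ∑ t ∈ Finset.range (n - k), ∑ v : Fin t → Fin 2,
              (∏ i, c (w i)) * ((∏ i, c ((v i : ℕ))) * d) :=
            Finset.sum_congr rfl fun t _ => Finset.sum_congr rfl fun v _ => by
              rw [tsum_congr fun j => hterm k w t v j, ENNReal.tsum_mul_left,
                ENNReal.tsum_mul_left]
        _ = ∑ t ∈ Finset.range (n - k), (∏ i, c (w i)) * (a ^ t * d) :=
            Finset.sum_congr rfl fun t _ => by
              rw [← Finset.mul_sum, ← Finset.sum_mul, hv t]
        _ = (∏ i, c (w i)) * ((∑ t ∈ Finset.range (n - k), a ^ t) * d) := by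
            rw [← Finset.mul_sum, ← Finset.sum_mul]
    rw [tsum_congr hw, ENNReal.tsum_mul_right, tsum_pi_prod c k]
  -- uniform (in n) bound
  have hbound : ∀ k n : ℕ,
      (∑' w : Fin k → ℕ, ∑ t ∈ Finset.range (n - k), ∑ v : Fin t → Fin 2, ∑' j : ℕ,
          ∫⁻ ω, ENNReal.ofReal
            ((xibar ξ (List.ofFn w ++ (List.ofFn fun i => ((v i : ℕ))) ++ [j + 2]) ω)
              ^ q) ∂P)
        ≤ ctot ^ k * K := by
    intro k n
    rw [hsum k n, hK]
    refine mul_le_mul' le_rfl (mul_le_mul' ?_ le_rfl)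
    rw [← ENNReal.tsum_geometric a]
    exact ENNReal.sum_le_tsum _
  have hM : Tendsto (fun k : ℕ => ctot ^ k * K) atTop (𝓝 0) := by
    have h0 : Tendsto (fun k : ℕ => ctot ^ k) atTop (𝓝 0) :=
      ENNReal.tendsto_pow_atTop_nhds_zero_of_lt_one hctot
    simpa using ENNReal.Tendsto.mul_const h0 (Or.inr hKne)
  refine tendsto_of_tendsto_of_tendsto_of_le_of_le tendsto_const_nhds hM
    (fun k => zero_le) (fun k => ?_)
  exact Filter.limsup_le_of_le (by isBoundedDefault)
    (Filter.Eventually.of_forall fun n => hbound k n)
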